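/- The resolvent U is m-transient if and only if its weak dual resolvent U* is m-transient. -/

import Mathlib

open MeasureTheory ENNReal Filter Set

/-- A sub-Markovian resolvent of kernels on a measurable space `E`. -/
structure SubMarkovResolvent (E : Type*) [MeasurableSpace E] where
  /-- the kernel `U_α` for each `α > 0` -/
  kernel : ℝ → E → MeasureTheory.Measure E
  measurable_op : ∀ α : ℝ, 0 < α → ∀ f : E → ℝ≥0∞, Measurable f →
    Measurable (fun x => ∫⁻ y, f y ∂(kernel α x))
  resolvent_eq : ∀ α β : ℝ, 0 < α → α ≤ β → ∀ f : E → ℝ≥0∞, Measurable f → ∀ x,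
    ∫⁻ y, f y ∂(kernel α x)
      = (∫⁻ y, f y ∂(kernel β x))
        + ENNReal.ofReal (β - α) * ∫⁻ y, (∫⁻ z, f z ∂(kernel β y)) ∂(kernel α x)
  subMarkov : ∀ α : ℝ, 0 < α → ∀ x, ENNReal.ofReal α * kernel α x Set.univ ≤ 1

namespace SubMarkovResolvent

variable {E : Type*} [MeasurableSpace E]

/-- The action of `U_α` on positive measurable functions. -/
noncomputable def op (R : SubMarkovResolvent E) (α : ℝ) (f : E → ℝ≥0∞) (x : E) : ℝ≥0∞ :=
  ∫⁻ y, f y ∂(R.kernel α x)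

/-- The action of `U_α` on real-valued functions. -/
noncomputable def opR (R : SubMarkovResolvent E) (α : ℝ) (f : E → ℝ) (x : E) : ℝ :=
  ∫ y, f y ∂(R.kernel α x)

/-- The initial (potential) kernel `U = sup_{α > 0} U_α`. -/
noncomputable def pot (R : SubMarkovResolvent E) (f : E → ℝ≥0∞) (x : E) : ℝ≥0∞ :=
  ⨆ (α : ℝ) (_ : 0 < α), R.op α f x

/-- `m` is sub-invariant: `m ∘ (α U_α) ≤ m` for all `α > 0`. -/
def SubInvariant (R : SubMarkovResolvent E) (m : Measure E) : Prop :=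
  ∀ α : ℝ, 0 < α → ∀ f : E → ℝ≥0∞, Measurable f →
    ENNReal.ofReal α * ∫⁻ x, R.op α f x ∂m ≤ ∫⁻ x, f x ∂m

/-- `U` is `m`-transient. -/
def Transient (R : SubMarkovResolvent E) (m : Measure E) : Prop :=
  ∃ f : E → ℝ≥0∞, Measurable f ∧ (∫⁻ x, f x ∂m < ⊤) ∧
    (∀ᵐ x ∂m, 0 < f x) ∧ (∀ᵐ x ∂m, R.pot f x < ⊤)

/-- `U` is `m`-recurrent. -/
def Recurrent (R : SubMarkovResolvent E) (m : Measure E) : Prop :=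
  ∀ f : E → ℝ≥0∞, Measurable f → (∫⁻ x, f x ∂m < ⊤) →
    m {x | 0 < R.pot f x ∧ R.pot f x < ⊤} = 0

/-- `A` is `U`-absorbing with respect to `m`. -/
def Absorbing (R : SubMarkovResolvent E) (m : Measure E) (A : Set E) : Prop :=
  MeasurableSet A ∧ ∀ᵐ x ∂m, x ∈ A → R.pot (Set.indicator Aᶜ 1) x = 0

/-- `U` is `m`-irreducible. -/
def Irreducible (R : SubMarkovResolvent E) (m : Measure E) : Prop :=
  ∀ A : Set E, R.Absorbing m A → m A = 0 ∨ m Aᶜ = 0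

/-- `u` is `U`-excessive: supermedian and `α U_α u ↑ u` as `α → ∞`. -/
def Excessive (R : SubMarkovResolvent E) (u : E → ℝ≥0∞) : Prop :=
  Measurable u ∧ (∀ α : ℝ, 0 < α → ∀ x, ENNReal.ofReal α * R.op α u x ≤ u x) ∧
    (∀ x, (⨆ (α : ℝ) (_ : 0 < α), ENNReal.ofReal α * R.op α u x) = u x)

/-- The complete maximum principle for the initial kernel of `U`. -/
def CompleteMaxPrinciple (R : SubMarkovResolvent E) : Prop :=
  ∀ (f g : E → ℝ≥0∞) (c : ℝ≥0∞), Measurable f → Measurable g →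
    (∀ x, 0 < f x → R.pot f x ≤ R.pot g x + c) → ∀ x, R.pot f x ≤ R.pot g x + c

/-- `U` and `U*` are in weak duality with respect to `m`. -/
def InDuality (R S : SubMarkovResolvent E) (m : Measure E) : Prop :=
  ∀ α : ℝ, 0 < α → ∀ f g : E → ℝ≥0∞, Measurable f → Measurable g →
    ∫⁻ x, f x * R.op α g x ∂m = ∫⁻ x, g x * S.op α f x ∂m

/-- A real-valued function `v` is `U`-invariant with respect to `m`:
`U_α(v f) = v ⋅ U_α f` `m`-a.e. for all `α > 0` and bounded positive measurable `f`. -/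
def Invariant (R : SubMarkovResolvent E) (m : Measure E) (v : E → ℝ) : Prop :=
  ∀ α : ℝ, 0 < α → ∀ f : E → ℝ, Measurable f → (∀ x, 0 ≤ f x) → (∃ C : ℝ, ∀ x, f x ≤ C) →
    ∀ᵐ x ∂m, R.opR α (fun y => v y * f y) x = v x * R.opR α f x

end SubMarkovResolvent

namespace SubMarkovResolvent

variable {E : Type*} [MeasurableSpace E]

lemma op_mono (R : SubMarkovResolvent E) {α β : ℝ} (hα : 0 < α) (hαβ : α ≤ β)
    {f : E → ℝ≥0∞} (hf : Measurable f) (x : E) : R.op β f x ≤ R.op α f x := by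
  have h := R.resolvent_eq α β hα hαβ f hf x
  simp only [op] at *
  rw [h]; exact le_self_add

lemma pot_eq_iSup_nat (R : SubMarkovResolvent E) {f : E → ℝ≥0∞} (hf : Measurable f) (x : E) :
    R.pot f x = ⨆ n : ℕ, R.op (1 / ((n : ℝ) + 1)) f x := by
  refine le_antisymm (iSup₂_le fun α hα => ?_) (iSup_le fun n => ?_)
  · obtain ⟨n, hn⟩ := exists_nat_gt (1 / α)
    have hn1 : (0:ℝ) < (n : ℝ) + 1 := by positivity
    have h1 : 1 / ((n : ℝ) + 1) ≤ α := by
      rw [div_le_iff₀ hn1]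
      have : 1 < (n : ℝ) * α := by
        rw [div_lt_iff₀ hα] at hn; linarith
      nlinarith
    exact le_trans (R.op_mono (by positivity) h1 hf x) (le_iSup (fun n : ℕ => R.op (1 / ((n : ℝ) + 1)) f x) n)
  · exact le_iSup₂ (f := fun (α : ℝ) (_ : 0 < α) => R.op α f x)
      (1 / ((n : ℝ) + 1)) (by positivity)

lemma measurable_pot (R : SubMarkovResolvent E) {f : E → ℝ≥0∞} (hf : Measurable f) :
    Measurable (R.pot f) := by
  have h : R.pot f = fun x => ⨆ n : ℕ, R.op (1 / ((n : ℝ) + 1)) f x :=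
    funext fun x => R.pot_eq_iSup_nat hf x
  rw [h]
  exact Measurable.iSup fun n => R.measurable_op _ (by positivity) f hf

lemma lintegral_mul_pot (R : SubMarkovResolvent E) (m : MeasureTheory.Measure E)
    {f g : E → ℝ≥0∞} (hf : Measurable f) (hg : Measurable g) :
    ∫⁻ x, f x * R.pot g x ∂m
      = ⨆ n : ℕ, ∫⁻ x, f x * R.op (1 / ((n : ℝ) + 1)) g x ∂m := by
  have h : ∀ x, f x * R.pot g x = ⨆ n : ℕ, f x * R.op (1 / ((n : ℝ) + 1)) g x := fun x => by
    rw [R.pot_eq_iSup_nat hg, ENNReal.mul_iSup]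
  simp_rw [h]
  refine lintegral_iSup (fun n => hf.mul (R.measurable_op _ (by positivity) g hg)) ?_
  intro a b hab x
  refine mul_le_mul_right (R.op_mono (by positivity) ?_ hg x) _
  refine one_div_le_one_div_of_le (by positivity) ?_
  have : (a : ℝ) ≤ b := Nat.cast_le.mpr hab
  linarith

lemma lintegral_pot_duality {R S : SubMarkovResolvent E} {m : MeasureTheory.Measure E}
    (hD : R.InDuality S m) {f g : E → ℝ≥0∞} (hf : Measurable f) (hg : Measurable g) :
    ∫⁻ x, f x * R.pot g x ∂m = ∫⁻ x, g x * S.pot f x ∂m := by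
  rw [R.lintegral_mul_pot m hf hg, S.lintegral_mul_pot m hg hf]
  exact iSup_congr fun n => hD _ (by positivity) f g hf hg

lemma transient_of_dual {R S : SubMarkovResolvent E} {m : MeasureTheory.Measure E}
    [MeasureTheory.SigmaFinite m] (hD : R.InDuality S m) (hT : R.Transient m) :
    S.Transient m := by
  obtain ⟨f, hf, hfint, hfpos, hfpot⟩ := hT
  obtain ⟨h, hpos, hmeas, hint⟩ :=
    MeasureTheory.exists_pos_lintegral_lt_of_sigmaFinite m (one_ne_zero : (1 : ℝ≥0∞) ≠ 0)
  set p : E → ℝ≥0∞ := R.pot f with hp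
  have hpmeas : Measurable p := R.measurable_pot hf
  set g : E → ℝ≥0∞ := fun x => (h x : ℝ≥0∞) * (1 + p x)⁻¹ with hgdef
  have hgmeas : Measurable g :=
    hmeas.coe_nnreal_ennreal.mul (measurable_const.add hpmeas).inv
  have hgle : ∀ x, g x ≤ (h x : ℝ≥0∞) := fun x =>
    mul_le_of_le_one_right' (ENNReal.inv_le_one.mpr le_self_add)
  have hgint : ∫⁻ x, g x ∂m < ⊤ :=
    lt_of_le_of_lt (MeasureTheory.lintegral_mono hgle) (hint.trans ENNReal.one_lt_top)
  have hinvmul : ∀ x, (1 + p x)⁻¹ * p x ≤ 1 := by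
    intro x
    rcases eq_or_ne (p x) ⊤ with hx | hx
    · simp [hx]
    · calc (1 + p x)⁻¹ * p x ≤ (1 + p x)⁻¹ * (1 + p x) :=
            mul_le_mul_right le_add_self _
        _ = 1 := ENNReal.inv_mul_cancel (by simp) (by simp [hx])
  have hkey : ∫⁻ x, f x * S.pot g x ∂m < ⊤ := by
    have hd := lintegral_pot_duality hD hgmeas hf
    rw [← hd]
    refine lt_of_le_of_lt (MeasureTheory.lintegral_mono fun x => ?_) (hint.trans ENNReal.one_lt_top)
    calc g x * p x = (h x : ℝ≥0∞) * ((1 + p x)⁻¹ * p x) := by rw [hgdef]; ring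
      _ ≤ (h x : ℝ≥0∞) * 1 := mul_le_mul_right (hinvmul x) _
      _ = (h x : ℝ≥0∞) := mul_one _
  have hae1 : ∀ᵐ x ∂m, f x * S.pot g x < ⊤ :=
    MeasureTheory.ae_lt_top (hf.mul (S.measurable_pot hgmeas)) hkey.ne
  refine ⟨g, hgmeas, hgint, ?_, ?_⟩
  · filter_upwards [hfpot] with x hx
    refine ENNReal.mul_pos ?_ ?_
    · exact (ENNReal.coe_pos.mpr (hpos x)).ne'
    · exact (ENNReal.inv_pos.mpr (by simp [hx.ne])).ne'
  · filter_upwards [hae1, hfpos] with x hx hfx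
    by_contra hcon
    push_neg at hcon
    have : S.pot g x = ⊤ := top_le_iff.mp hcon
    rw [this, ENNReal.mul_top hfx.ne'] at hx
    exact (lt_irrefl _ hx).elim

end SubMarkovResolvent

/-- `U` is `m`-transient iff its weak dual `U*` is `m`-transient. -/
theorem transient_iff_dual_transient {E : Type*} [MeasurableSpace E]
    (R S : SubMarkovResolvent E) (m : MeasureTheory.Measure E) [MeasureTheory.SigmaFinite m]
    (hm : R.SubInvariant m) (hD : R.InDuality S m) :
    R.Transient m ↔ S.Transient m := by
  have hSD : S.InDuality R m := fun α hα f g hf hg => (hD α hα g f hg hf).symm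
  exact ⟨fun hT => SubMarkovResolvent.transient_of_dual hD hT,
    fun hT => SubMarkovResolvent.transient_of_dual hSD hT⟩
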